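/- arXiv:1310.8122 — 2 statements merged into one kernel-verified Lean document; each statement's English description precedes it below -/
import Mathlib

section
/- Let l ≥ 1, (S_δ)_{δ≥1} real numbers, s_0 = l, s_ν = l(1 + Σ_{μ=0}^{ν−1} s_μ) − S_ν for ν ≥ 1, and ℓ_ν = 1 + Σ_{μ=0}^{ν−1} s_μ. Then for every ν ≥ 1, ℓ_ν = (l+1)^ν · (1 − Σ_{δ=1}^{ν−1} S_δ/(l+1)^{δ+1}). -/
open Finset

/-- Key identity: `ℓ ν = (l+1)^ν (1 - ∑_{δ=1}^{ν-1} S δ / (l+1)^{δ+1})`. -/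
theorem stmt_2 (l : ℕ) (hl : 1 ≤ l) (S s L : ℕ → ℝ)
    (h0 : s 0 = l)
    (hrec : ∀ ν ≥ 1, s ν = l * (1 + ∑ μ ∈ range ν, s μ) - S ν)
    (hL : ∀ ν, L ν = 1 + ∑ μ ∈ range ν, s μ) :
    ∀ ν ≥ 1, L ν = ((l : ℝ) + 1) ^ ν
      * (1 - ∑ δ ∈ Ico 1 ν, S δ / ((l : ℝ) + 1) ^ (δ + 1)) := by
  have hne : ((l : ℝ) + 1) ≠ 0 := by positivity
  intro ν hν
  induction ν with
  | zero => omega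
  | succ n ih =>
    have hstep : L (n + 1) = L n + s n := by
      rw [hL (n+1), hL n, Finset.sum_range_succ]; ring
    rcases Nat.eq_or_lt_of_le hν with h1 | h1
    · have hn0 : n = 0 := by omega
      subst hn0
      simp [hL 1, h0]
      ring
    · have hn1 : 1 ≤ n := by omega
      have ihn := ih hn1
      have hs : s n = l * L n - S n := by rw [hL n]; exact hrec n hn1
      rw [hstep, hs, ihn, Finset.sum_Ico_succ_top hn1]
      field_simp
      ring
end

section
/- Let f : [a,b] → [a,b] be continuous. Then there exist a' ≤ a, b' ≥ b and a continuous map F : [a',b'] → [a',b'] such that F restricted to [a,b] equals f, F({a',b'}) ⊆ {a',b'}, and the topological entropy satisfies h(F) = h(f). -/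
open Dynamics Set Function Uniformity UniformSpace
open scoped SetRel

namespace Stmt16Aux


/-- metric entourage -/
def E (δ : ℝ) : Set (ℝ × ℝ) := {p | dist p.1 p.2 < δ}

lemma E_mem {δ : ℝ} (hδ : 0 < δ) : E δ ∈ 𝓤 ℝ := Metric.dist_mem_uniformity hδ

lemma E_symm (δ : ℝ) : SetRel.IsSymm (E δ) :=
  ⟨fun x y h => show dist y x < δ from (dist_comm y x).trans_lt h⟩

instance E_isSymm (δ : ℝ) : SetRel.IsSymm (E δ) := E_symm δ

lemma E_mono {δ δ' : ℝ} (h : δ ≤ δ') : E δ ⊆ E δ' := fun p hp => lt_of_lt_of_le hp h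

lemma E_comp {δ δ' : ℝ} : E δ ○ E δ' ⊆ E (δ + δ') := by
  rintro ⟨x, y⟩ ⟨z, h1, h2⟩
  exact lt_of_le_of_lt (dist_triangle x z y) (add_lt_add h1 h2)

lemma mem_E {δ : ℝ} {x y : ℝ} : (x, y) ∈ E δ ↔ |x - y| < δ := by
  simp [E, Real.dist_eq]

/-- the extension map -/
noncomputable def ext (a b : ℝ) (f : ℝ → ℝ) (x : ℝ) : ℝ :=
  f (max a (min b x)) + 2 * (x - max a (min b x))

section basic

variable {a b : ℝ} {f : ℝ → ℝ} (hab : a ≤ b)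

lemma ext_eq_mid (hab : a ≤ b) {x : ℝ} (hx : x ∈ Icc a b) : ext a b f x = f x := by
  have h1 : max a (min b x) = x := by
    rw [min_eq_right hx.2, max_eq_right hx.1]
  simp [ext, h1]

lemma ext_eq_left (hab : a ≤ b) {x : ℝ} (hx : x ≤ a) : ext a b f x = f a + 2 * (x - a) := by
  have h1 : max a (min b x) = a := by
    rw [min_eq_right (hx.trans hab), max_eq_left hx]
  simp [ext, h1]

lemma ext_eq_right (hab : a ≤ b) {x : ℝ} (hx : b ≤ x) : ext a b f x = f b + 2 * (x - b) := by
  have h1 : max a (min b x) = b := by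
    rw [min_eq_left hx, max_eq_right hab]
  simp [ext, h1]

lemma ext_continuousOn (hab : a ≤ b) (hf : ContinuousOn f (Icc a b)) :
    ContinuousOn (ext a b f) univ := by
  have hclamp : Continuous fun x : ℝ => max a (min b x) :=
    continuous_const.max (continuous_const.min continuous_id)
  have h1 : ContinuousOn (fun x : ℝ => f (max a (min b x))) univ := by
    apply hf.comp hclamp.continuousOn
    intro x _
    constructor
    · exact le_max_left _ _
    · exact max_le hab (min_le_left _ _)
  exact h1.add (by fun_prop)

variable (hmap : MapsTo f (Icc a b) (Icc a b))

lemma ext_mapsTo (hab : a ≤ b) (hmap : MapsTo f (Icc a b) (Icc a b)) :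
    MapsTo (ext a b f) (Icc (2*a - f a) (2*b - f b)) (Icc (2*a - f a) (2*b - f b)) := by
  have hfa := hmap ⟨le_refl a, hab⟩
  have hfb := hmap ⟨hab, le_refl b⟩
  intro x hx
  rw [mem_Icc] at hfa hfb hx ⊢
  rcases le_or_gt x a with h | h
  · rw [ext_eq_left hab h]
    constructor <;> [linarith [hx.1]; linarith]
  rcases le_or_gt b x with h2 | h2
  · rw [ext_eq_right hab h2]
    constructor <;> [linarith; linarith [hx.2]]
  · rw [ext_eq_mid hab ⟨h.le, h2.le⟩]
    have h3 := hmap ⟨h.le, h2.le⟩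
    rw [mem_Icc] at h3
    constructor <;> linarith [h3.1, h3.2]

lemma ext_mapsTo_I (hab : a ≤ b) (hmap : MapsTo f (Icc a b) (Icc a b)) :
    MapsTo (ext a b f) (Icc a b) (Icc a b) := fun x hx => by
  rw [ext_eq_mid hab hx]; exact hmap hx

lemma ext_iterate_mid (hab : a ≤ b) (hmap : MapsTo f (Icc a b) (Icc a b))
    {x : ℝ} (hx : x ∈ Icc a b) (n : ℕ) : (ext a b f)^[n] x = f^[n] x := by
  induction n generalizing x with
  | zero => simp
  | succ n ih =>
    rw [iterate_succ_apply, iterate_succ_apply, ext_eq_mid hab hx]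
    exact ih (hmap hx)

lemma ext_iterate_mem (hab : a ≤ b) (hmap : MapsTo f (Icc a b) (Icc a b))
    {x : ℝ} (hx : x ∈ Icc a b) (n : ℕ) : (ext a b f)^[n] x ∈ Icc a b := by
  rw [ext_iterate_mid hab hmap hx n]
  induction n with
  | zero => simpa
  | succ n ih => rw [iterate_succ_apply']; exact hmap ih

/-- left linear-phase orbit formula -/
lemma ext_iterate_left (hab : a ≤ b) (hmap : MapsTo f (Icc a b) (Icc a b))
    {x : ℝ} (hx : 2*a - f a ≤ x) {j : ℕ} (hj : 2^j * (x - (2*a - f a)) ≤ 2*(a - (2*a - f a))) :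
    (ext a b f)^[j] x = (2*a - f a) + 2^j * (x - (2*a - f a)) := by
  induction j with
  | zero => simp
  | succ j ih =>
    have hxa : (0:ℝ) ≤ x - (2*a - f a) := by linarith
    have h2j : (2:ℝ)^j ≤ 2^(j+1) := by
      apply pow_le_pow_right₀ <;> norm_num
    have hj' : 2^j * (x - (2*a - f a)) ≤ 2*(a - (2*a - f a)) :=
      le_trans (by nlinarith) hj
    have hguard : 2^j * (x - (2*a - f a)) ≤ (a - (2*a - f a)) := by
      have : (2:ℝ)^(j+1) = 2 * 2^j := by ring
      nlinarith [hj]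
    rw [iterate_succ_apply', ih hj']
    have hle : (2*a - f a) + 2^j * (x - (2*a - f a)) ≤ a := by linarith
    rw [ext_eq_left hab hle]
    ring

/-- right linear-phase orbit formula -/
lemma ext_iterate_right (hab : a ≤ b) (hmap : MapsTo f (Icc a b) (Icc a b))
    {x : ℝ} (hx : x ≤ 2*b - f b) {j : ℕ} (hj : 2^j * ((2*b - f b) - x) ≤ 2*((2*b - f b) - b)) :
    (ext a b f)^[j] x = (2*b - f b) - 2^j * ((2*b - f b) - x) := by
  induction j with
  | zero => simp
  | succ j ih =>
    have hxa : (0:ℝ) ≤ (2*b - f b) - x := by linarith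
    have h2j : (2:ℝ)^j ≤ 2^(j+1) := by
      apply pow_le_pow_right₀ <;> norm_num
    have hj' : 2^j * ((2*b - f b) - x) ≤ 2*((2*b - f b) - b) :=
      le_trans (by nlinarith) hj
    have hguard : 2^j * ((2*b - f b) - x) ≤ ((2*b - f b) - b) := by
      have : (2:ℝ)^(j+1) = 2 * 2^j := by ring
      nlinarith [hj]
    rw [iterate_succ_apply', ih hj']
    have hle : b ≤ (2*b - f b) - 2^j * ((2*b - f b) - x) := by linarith
    rw [ext_eq_right hab hle]
    ring

end basic



-- general: coverEntropy is monotone in the set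
lemma coverMincard_mono_set {X : Type*} {T : X → X} {F G : Set X} (h : F ⊆ G)
    (U : Set (X × X)) (n : ℕ) : coverMincard T F U n ≤ coverMincard T G U n := by
  apply le_iInf₂
  intro s hs
  exact IsDynCoverOf.coverMincard_le_card (h.trans hs)

lemma coverEntropy_mono_set {X : Type*} [UniformSpace X] {T : X → X} {F G : Set X} (h : F ⊆ G) :
    coverEntropy T F ≤ coverEntropy T G := by
  refine iSup₂_mono fun U _ => ?_
  refine Filter.limsup_le_limsup (Filter.Eventually.of_forall fun n => ?_)
  exact EReal.monotone_div_right_of_nonneg (Nat.cast_nonneg' n)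
    (ENNReal.log_monotone (ENat.toENNReal_mono (coverMincard_mono_set h U n)))

-- general: coverEntropy only depends on values on an invariant set
lemma coverEntropy_congr_inv {X : Type*} [UniformSpace X] {T S : X → X} {F : Set X}
    (hT : MapsTo T F F) (hS : MapsTo S F F) (h : EqOn T S F) :
    coverEntropy T F = coverEntropy S F := by
  have h1 := coverEntropy_restrict hT
  have h2 := coverEntropy_restrict hS
  rw [← h1, ← h2]
  congr 1
  funext x
  exact Subtype.ext (h x.2)

-- converting a dynamical cover to one with centers in the covered set
lemma cover_centers {X : Type*} {T : X → X} {F : Set X} {U : Set (X × X)}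
    (U_symm : SetRel.IsSymm U) {n : ℕ} {s : Finset X} (hs : IsDynCoverOf T F U n s) :
    ∃ t : Finset X, ↑t ⊆ F ∧ IsDynCoverOf T F (U ○ U) n t ∧ t.card ≤ s.card := by
  classical
  rcases hs.nonempty_inter with ⟨u, u_cover, u_card, u_inter⟩
  choose! g hg using fun (x : X) (h : x ∈ u) => (u_inter x h)
  refine ⟨u.image g, ?_, ?_, Finset.card_image_le.trans u_card⟩
  · intro y hy
    simp only [Finset.coe_image, mem_image, Finset.mem_coe] at hy
    rcases hy with ⟨x, hx, rfl⟩
    exact (hg x hx).2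
  · intro y hy
    obtain ⟨x, hx, hyx⟩ := u_cover hy
    refine ⟨g x, by simp only [Finset.coe_image, mem_image, Finset.mem_coe]; exact ⟨x, hx, rfl⟩, ?_⟩
    exact mem_ball_dynEntourage_comp T n (g x) y ⟨x, mem_ball_symmetry.1 (hg x hx).1, hyx⟩

open ENNReal EReal Filter in
-- asymptotics : log (K * (n+1)) / n → 0
lemma tendsto_log_lin {K : ℕ} (hK : 1 ≤ K) :
    Tendsto (fun n : ℕ => ENNReal.log ((K * (n+1) : ℕ) : ℝ≥0∞) / (n : EReal))
      atTop (nhds 0) := by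
  have hreal : Tendsto (fun n : ℕ => Real.log (K * (n+1)) / n) atTop (nhds 0) := by
    have h1 : Tendsto (fun x : ℝ => Real.log x / x) atTop (nhds 0) :=
      Real.isLittleO_log_id_atTop.tendsto_div_nhds_zero
    have h2 : Tendsto (fun n : ℕ => (K * (n+1) : ℝ)) atTop atTop := by
      apply Tendsto.const_mul_atTop (by exact_mod_cast hK : (0:ℝ) < K)
      exact tendsto_atTop_add_const_right _ 1 tendsto_natCast_atTop_atTop
    have h3 : Tendsto (fun n : ℕ => Real.log (K * (n+1)) / (K * (n+1) : ℝ)) atTop (nhds 0) :=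
      h1.comp h2
    have h4 : Tendsto (fun n : ℕ => ((K * (n+1) : ℝ)) / n) atTop (nhds (K : ℝ)) := by
      have heq : (fun n : ℕ => ((K * (n+1) : ℝ)) / n) =ᶠ[atTop] fun n : ℕ => K + K / n := by
        filter_upwards [eventually_gt_atTop 0] with n hn
        have : (n:ℝ) ≠ 0 := by positivity
        field_simp
      rw [tendsto_congr' heq]
      have h5 : Tendsto (fun n : ℕ => (K:ℝ) / n) atTop (nhds 0) :=
        Tendsto.div_atTop tendsto_const_nhds tendsto_natCast_atTop_atTop
      simpa using (tendsto_const_nhds (x := (K:ℝ)) (f := (atTop : Filter ℕ))).add h5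
    have h6 := h3.mul h4
    rw [zero_mul] at h6
    apply h6.congr'
    filter_upwards [eventually_gt_atTop 0] with n hn
    have hKn : (0:ℝ) < (K * (n+1) : ℝ) := by positivity
    field_simp
  have hcast : ∀ᶠ n : ℕ in atTop,
      ENNReal.log ((K * (n+1) : ℕ) : ℝ≥0∞) / (n : EReal)
        = ((Real.log (K * (n+1)) / n : ℝ) : EReal) := by
    filter_upwards [eventually_gt_atTop 0] with n hn
    have hpos : (0:ℝ) < ((K * (n+1) : ℕ) : ℝ) := by positivity
    have : ((K * (n+1) : ℕ) : ℝ≥0∞) = ENNReal.ofReal ((K * (n+1) : ℕ) : ℝ) := by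
      rw [ENNReal.ofReal_natCast]
    rw [this, ENNReal.log_ofReal_of_pos hpos, EReal.coe_div]
    push_cast
    norm_cast
  rw [tendsto_congr' hcast, ← EReal.coe_zero]
  exact (continuous_coe_real_ereal.tendsto 0).comp hreal

lemma mem_ball_E {δ : ℝ} {x y : ℝ} : y ∈ ball x (E δ) ↔ |x - y| < δ := by
  simp [ball, E, Real.dist_eq]

lemma cover_of_pieces {T : ℝ → ℝ} {S : Set ℝ} {V : Set (ℝ × ℝ)} {n : ℕ} {ι : Type*}
    (P : ι → Set ℝ) (s : Finset ι)
    (hcov : ∀ x ∈ S, ∃ i ∈ s, x ∈ P i)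
    (hsmall : ∀ i ∈ s, ∀ x ∈ P i, ∀ y ∈ P i, ∀ j < n, (T^[j] x, T^[j] y) ∈ V) :
    ∃ t : Finset ℝ, IsDynCoverOf T S V n ↑t ∧ t.card ≤ s.card := by
  classical
  set rep : ι → ℝ := fun i => if h : (P i).Nonempty then h.choose else 0 with hrep
  refine ⟨s.image rep, ?_, Finset.card_image_le⟩
  intro x hx
  obtain ⟨i, his, hxi⟩ := hcov x hx
  have hne : (P i).Nonempty := ⟨x, hxi⟩
  have hrepi : rep i ∈ P i := by
    rw [hrep]; simp only [dif_pos hne]; exact hne.choose_spec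
  refine ⟨rep i, Finset.mem_coe.2 (Finset.mem_image_of_mem rep his), ?_⟩
  rw [mem_dynEntourage]
  intro j hj
  exact hsmall i his x hxi (rep i) hrepi j hj

lemma isDynCoverOf_union {T : ℝ → ℝ} {S₁ S₂ : Set ℝ} {V : Set (ℝ × ℝ)} {n : ℕ}
    {t₁ t₂ : Finset ℝ} (h1 : IsDynCoverOf T S₁ V n ↑t₁) (h2 : IsDynCoverOf T S₂ V n ↑t₂) :
    IsDynCoverOf T (S₁ ∪ S₂) V n ↑(t₁ ∪ t₂) := by
  rw [Finset.coe_union]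
  exact SetRel.IsCover.union h1 h2



lemma floor_interval {w r : ℝ} (hw : 0 < w) (hr : 0 ≤ r) :
    (⌊r/w⌋₊ : ℝ) * w ≤ r ∧ r ≤ ((⌊r/w⌋₊ : ℝ) + 1) * w := by
  constructor
  · have h := Nat.floor_le (div_nonneg hr hw.le)
    calc (⌊r/w⌋₊ : ℝ) * w ≤ (r/w)*w := by nlinarith
    _ = r := div_mul_cancel₀ r hw.ne'
  · have h := (Nat.lt_floor_add_one (r/w)).le
    calc r = (r/w)*w := (div_mul_cancel₀ r hw.ne').symm
    _ ≤ ((⌊r/w⌋₊ : ℝ) + 1)*w := by nlinarith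


section main
variable {a b : ℝ} {f : ℝ → ℝ}

set_option maxHeartbeats 1000000 in
lemma main_cover (hab : a ≤ b) (hmap : MapsTo f (Icc a b) (Icc a b)) {δ : ℝ} (hδ : 0 < δ)
    {n : ℕ} (hn : 1 ≤ n) {s : Finset ℝ}
    (hcov : IsDynCoverOf f (Icc a b) (E δ) n ↑s) :
    ∃ t : Finset ℝ,
      IsDynCoverOf (ext a b f) (Icc (2*a - f a) (2*b - f b)) (E (2*δ)) n ↑t ∧
      t.card ≤ (4*(⌊(2*((a - (2*a - f a)) + ((2*b - f b) - b)))/δ⌋₊ + 1) + 1) * (n+1) * s.card := by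
  classical
  have hfa := hmap ⟨le_refl a, hab⟩
  have hfb := hmap ⟨hab, le_refl b⟩
  rw [mem_Icc] at hfa hfb
  set A := 2*a - f a with hA
  set B := 2*b - f b with hB
  set F := ext a b f with hF
  set lam := a - A with hlam
  set rho := B - b with hrho
  have hlam0 : 0 ≤ lam := by rw [hlam, hA]; linarith [hfa.1]
  have hrho0 : 0 ≤ rho := by rw [hrho, hB]; linarith [hfb.2]
  set C := ⌊(2*(lam + rho))/δ⌋₊ + 1 with hC
  have hCb : ∀ r : ℝ, 0 ≤ r → r ≤ 2*(lam+rho) → ⌊r/δ⌋₊ < C := by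
    intro r hr hr2
    rw [hC]
    refine Nat.lt_succ_of_le (Nat.floor_le_floor ?_)
    gcongr
  have hsne : s.Nonempty := by
    have := IsDynCoverOf.nonempty (Set.nonempty_Icc.2 hab) hcov
    exact_mod_cast Finset.coe_nonempty.1 this
  have hscard : 1 ≤ s.card := Finset.card_pos.2 hsne
  -- mid cover
  obtain ⟨t1, ht1c, ht1card⟩ := cover_of_pieces (T := F) (n := n)
      (S := Icc a b) (V := E (2*δ))
      (fun c : ℝ => {x | x ∈ Icc a b ∧ x ∈ ball c (dynEntourage f (E δ) n)}) s
      (fun x hx => by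
        obtain ⟨c, hc, hxc⟩ := hcov hx
        exact ⟨c, hc, hx, mem_ball_symmetry.2 hxc⟩)
      (fun c _ x hx y hy j hj => by
        rw [mem_E]
        rw [ext_iterate_mid hab hmap hx.1, ext_iterate_mid hab hmap hy.1]
        have h1 := (mem_ball_dynEntourage.1 hx.2) j hj
        have h2 := (mem_ball_dynEntourage.1 hy.2) j hj
        rw [mem_ball_E] at h1 h2
        have : f^[j] x - f^[j] y = (f^[j] c - f^[j] y) - (f^[j] c - f^[j] x) := by ring
        rw [this]
        calc |(f^[j] c - f^[j] y) - (f^[j] c - f^[j] x)|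
            ≤ |f^[j] c - f^[j] y| + |f^[j] c - f^[j] x| := abs_sub _ _
        _ < 2*δ := by linarith)
  -- deep left cover
  obtain ⟨t2, ht2c, ht2card⟩ := cover_of_pieces (T := F) (n := n)
      (S := {x | A ≤ x ∧ x ≤ a ∧ 2^n * (x - A) ≤ lam}) (V := E (2*δ))
      (fun i : ℕ => {x | A ≤ x ∧ x ≤ a ∧ 2^n * (x - A) ≤ lam ∧
        (i:ℝ)*(δ/2^n) ≤ x - A ∧ x - A ≤ ((i:ℝ)+1)*(δ/2^n)}) (Finset.range C)
      (fun x hx => by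
        obtain ⟨hx1, hx2, hx3⟩ := hx
        have hxA : (0:ℝ) ≤ x - A := by linarith
        have hw : (0:ℝ) < δ/2^n := by positivity
        refine ⟨⌊(x - A)/(δ/2^n)⌋₊, Finset.mem_range.2 ?_, hx1, hx2, hx3,
          (floor_interval hw hxA).1, (floor_interval hw hxA).2⟩
        have heq : (x - A)/(δ/2^n) = (2^n * (x - A))/δ := by
          field_simp
        rw [heq]
        apply hCb _ (by positivity) (by linarith [hx3, hrho0, hlam0])
      )
      (fun i _ x hx y hy j hj => by
        have hxy : |x - y| ≤ δ/2^n := by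
          rw [abs_sub_le_iff]
          constructor
          · linarith [hx.2.2.2.2, hy.2.2.2.1]
          · linarith [hy.2.2.2.2, hx.2.2.2.1]
        have hgx : 2^j * (x - A) ≤ 2*lam := by
          have h2j : (2:ℝ)^j ≤ 2^n := pow_le_pow_right₀ one_le_two hj.le
          have := mul_le_mul_of_nonneg_right h2j (by linarith [hx.1] : (0:ℝ) ≤ x - A)
          linarith [hx.2.2.1, hlam0]
        have hgy : 2^j * (y - A) ≤ 2*lam := by
          have h2j : (2:ℝ)^j ≤ 2^n := pow_le_pow_right₀ one_le_two hj.le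
          have := mul_le_mul_of_nonneg_right h2j (by linarith [hy.1] : (0:ℝ) ≤ y - A)
          linarith [hy.2.2.1, hlam0]
        rw [mem_E, ext_iterate_left hab hmap hx.1 hgx, ext_iterate_left hab hmap hy.1 hgy]
        have heq : (A + 2^j*(x - A)) - (A + 2^j*(y - A)) = 2^j * (x - y) := by ring
        rw [heq, abs_mul, abs_of_pos (pow_pos two_pos j)]
        have h2j : (2:ℝ)^j ≤ 2^n := pow_le_pow_right₀ one_le_two hj.le
        have hfin : (2:ℝ)^n * (δ/2^n) = δ := by field_simp
        have h4 : (2:ℝ)^j * |x - y| ≤ 2^n * (δ/2^n) :=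
          mul_le_mul h2j hxy (abs_nonneg _) (by positivity)
        linarith)
  -- main left cover
  obtain ⟨t3, ht3c, ht3card⟩ := cover_of_pieces (T := F) (n := n)
      (S := {x | A ≤ x ∧ x ≤ a ∧ lam < 2^n * (x - A)}) (V := E (2*δ))
      (fun p : ℕ × ℕ × ℝ => {x | A ≤ x ∧ x ≤ a ∧ lam ≤ 2^(p.1+1)*(x - A) ∧
        2^p.1*(x - A) ≤ lam ∧
        (p.2.1:ℝ)*(δ/2^(p.1+1)) ≤ x - A ∧ x - A ≤ ((p.2.1:ℝ)+1)*(δ/2^(p.1+1)) ∧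
        F^[p.1+1] x ∈ ball p.2.2 (dynEntourage f (E δ) n)})
      ((Finset.range n) ×ˢ ((Finset.range C) ×ˢ s))
      (fun x hx => by
        obtain ⟨hx1, hx2, hx3⟩ := hx
        have hxA : (0:ℝ) ≤ x - A := by linarith
        have hex : ∃ k, lam ≤ 2^(k+1)*(x - A) := by
          refine ⟨n-1, ?_⟩
          rw [Nat.sub_add_cancel hn]
          exact hx3.le
        set k := Nat.find hex with hk
        have hk1 : lam ≤ 2^(k+1)*(x - A) := Nat.find_spec hex
        have hk2 : 2^k*(x - A) ≤ lam := by
          match hkk : k with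
          | 0 => simpa using (by linarith : x - A ≤ lam)
          | m+1 =>
            have hmin := Nat.find_min hex (by omega : m < k)
            push_neg at hmin
            exact hmin.le
        have hkn : k < n := by
          have h5 : k ≤ n - 1 := Nat.find_min' hex (by
            rw [Nat.sub_add_cancel hn]; exact hx3.le)
          omega
        -- escape value
        have hguard : 2^(k+1)*(x - A) ≤ 2*lam := by
          rw [pow_succ]
          linarith [hk2]
        have hval : F^[k+1] x = A + 2^(k+1)*(x - A) :=
          ext_iterate_left hab hmap hx1 hguard
        have hmem : F^[k+1] x ∈ Icc a b := by
          rw [hval, mem_Icc]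
          constructor
          · have : a = A + lam := by rw [hlam]; ring
            linarith
          · have : A + 2*lam = f a := by rw [hlam, hA]; ring
            linarith [hfa.2]
        obtain ⟨c, hc, hxc⟩ := hcov hmem
        have hw : (0:ℝ) < δ/2^(k+1) := by positivity
        refine ⟨⟨k, ⌊(x - A)/(δ/2^(k+1))⌋₊, c⟩, ?_, hx1, hx2, hk1, hk2,
          (floor_interval hw hxA).1, (floor_interval hw hxA).2, mem_ball_symmetry.2 hxc⟩
        rw [Finset.mem_product, Finset.mem_product]
        refine ⟨Finset.mem_range.2 hkn, Finset.mem_range.2 ?_, hc⟩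
        have heq : (x - A)/(δ/2^(k+1)) = (2^(k+1) * (x - A))/δ := by
          field_simp
        rw [heq]
        exact hCb _ (by positivity) (by linarith)
      )
      (fun p hp x hx y hy j hj => by
        obtain ⟨k, i, c⟩ := p
        simp only at hx hy
        obtain ⟨hx1, hx2, hx3, hx4, hx5, hx6, hx7⟩ := hx
        obtain ⟨hy1, hy2, hy3, hy4, hy5, hy6, hy7⟩ := hy
        have hxy : |x - y| ≤ δ/2^(k+1) := by
          rw [abs_sub_le_iff]
          constructor
          · linarith [hx6, hy5]
          · linarith [hy6, hx5]
        rcases le_or_gt j (k+1) with hjk | hjk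
        · -- linear phase
          have h2j : (2:ℝ)^j ≤ 2^(k+1) := pow_le_pow_right₀ one_le_two hjk
          have hgx : 2^j * (x - A) ≤ 2*lam := by
            have h5 := mul_le_mul_of_nonneg_right h2j (by linarith [hx1] : (0:ℝ) ≤ x - A)
            have h6 : (2:ℝ)^(k+1)*(x-A) = 2*(2^k*(x-A)) := by ring
            linarith [hx4]
          have hgy : 2^j * (y - A) ≤ 2*lam := by
            have h5 := mul_le_mul_of_nonneg_right h2j (by linarith [hy1] : (0:ℝ) ≤ y - A)
            have h6 : (2:ℝ)^(k+1)*(y-A) = 2*(2^k*(y-A)) := by ring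
            linarith [hy4]
          rw [mem_E, ext_iterate_left hab hmap hx1 hgx, ext_iterate_left hab hmap hy1 hgy]
          have heq : (A + 2^j*(x - A)) - (A + 2^j*(y - A)) = 2^j * (x - y) := by ring
          rw [heq, abs_mul, abs_of_pos (pow_pos two_pos j)]
          have hfin : (2:ℝ)^(k+1) * (δ/2^(k+1)) = δ := by field_simp
          have h4 : (2:ℝ)^j * |x - y| ≤ 2^(k+1) * (δ/2^(k+1)) :=
            mul_le_mul h2j hxy (abs_nonneg _) (by positivity)
          linarith
        · -- tail phase
          set m := j - (k+1) with hm
          have hmj : m + (k+1) = j := Nat.sub_add_cancel hjk.le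
          have hmn : m < n := by omega
          have hguardx : 2^(k+1)*(x - A) ≤ 2*lam := by
            rw [pow_succ]; linarith [hx4]
          have hguardy : 2^(k+1)*(y - A) ≤ 2*lam := by
            rw [pow_succ]; linarith [hy4]
          have hmemx : F^[k+1] x ∈ Icc a b := by
            rw [ext_iterate_left hab hmap hx1 hguardx, ← hA, mem_Icc]
            constructor
            · have : a = A + lam := by rw [hlam]; ring
              linarith
            · have : A + 2*lam = f a := by rw [hlam, hA]; ring
              linarith [hfa.2]
          have hmemy : F^[k+1] y ∈ Icc a b := by
            rw [ext_iterate_left hab hmap hy1 hguardy, ← hA, mem_Icc]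
            constructor
            · have : a = A + lam := by rw [hlam]; ring
              linarith
            · have : A + 2*lam = f a := by rw [hlam, hA]; ring
              linarith [hfa.2]
          have hjx : F^[j] x = f^[m] (F^[k+1] x) := by
            rw [← hmj, iterate_add_apply, ext_iterate_mid hab hmap hmemx]
          have hjy : F^[j] y = f^[m] (F^[k+1] y) := by
            rw [← hmj, iterate_add_apply, ext_iterate_mid hab hmap hmemy]
          have h1 := (mem_ball_dynEntourage.1 hx7) m hmn
          have h2 := (mem_ball_dynEntourage.1 hy7) m hmn
          rw [mem_ball_E] at h1 h2
          rw [mem_E, hjx, hjy]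
          have heq : f^[m] (F^[k+1] x) - f^[m] (F^[k+1] y)
              = (f^[m] c - f^[m] (F^[k+1] y)) - (f^[m] c - f^[m] (F^[k+1] x)) := by ring
          rw [heq]
          calc |(f^[m] c - f^[m] (F^[k+1] y)) - (f^[m] c - f^[m] (F^[k+1] x))|
              ≤ |f^[m] c - f^[m] (F^[k+1] y)| + |f^[m] c - f^[m] (F^[k+1] x)| := abs_sub _ _
          _ < 2*δ := by linarith)
  -- deep right cover
  obtain ⟨t4, ht4c, ht4card⟩ := cover_of_pieces (T := F) (n := n)
      (S := {x | b ≤ x ∧ x ≤ B ∧ 2^n * (B - x) ≤ rho}) (V := E (2*δ))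
      (fun i : ℕ => {x | b ≤ x ∧ x ≤ B ∧ 2^n * (B - x) ≤ rho ∧
        (i:ℝ)*(δ/2^n) ≤ B - x ∧ B - x ≤ ((i:ℝ)+1)*(δ/2^n)}) (Finset.range C)
      (fun x hx => by
        obtain ⟨hx1, hx2, hx3⟩ := hx
        have hxB : (0:ℝ) ≤ B - x := by linarith
        have hw : (0:ℝ) < δ/2^n := by positivity
        refine ⟨⌊(B - x)/(δ/2^n)⌋₊, Finset.mem_range.2 ?_, hx1, hx2, hx3,
          (floor_interval hw hxB).1, (floor_interval hw hxB).2⟩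
        have heq : (B - x)/(δ/2^n) = (2^n * (B - x))/δ := by
          field_simp
        rw [heq]
        apply hCb _ (by positivity) (by linarith [hx3, hrho0, hlam0])
      )
      (fun i _ x hx y hy j hj => by
        have hxy : |x - y| ≤ δ/2^n := by
          rw [abs_sub_le_iff]
          constructor
          · linarith [hx.2.2.2.1, hy.2.2.2.2]
          · linarith [hy.2.2.2.1, hx.2.2.2.2]
        have hgx : 2^j * (B - x) ≤ 2*rho := by
          have h2j : (2:ℝ)^j ≤ 2^n := pow_le_pow_right₀ one_le_two hj.le
          have := mul_le_mul_of_nonneg_right h2j (by linarith [hx.2.1] : (0:ℝ) ≤ B - x)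
          linarith [hx.2.2.1, hrho0]
        have hgy : 2^j * (B - y) ≤ 2*rho := by
          have h2j : (2:ℝ)^j ≤ 2^n := pow_le_pow_right₀ one_le_two hj.le
          have := mul_le_mul_of_nonneg_right h2j (by linarith [hy.2.1] : (0:ℝ) ≤ B - y)
          linarith [hy.2.2.1, hrho0]
        rw [mem_E, ext_iterate_right hab hmap hx.2.1 hgx, ext_iterate_right hab hmap hy.2.1 hgy]
        have heq : (B - 2^j*(B - x)) - (B - 2^j*(B - y)) = 2^j * (x - y) := by ring
        rw [heq, abs_mul, abs_of_pos (pow_pos two_pos j)]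
        have h2j : (2:ℝ)^j ≤ 2^n := pow_le_pow_right₀ one_le_two hj.le
        have hfin : (2:ℝ)^n * (δ/2^n) = δ := by field_simp
        have h4 : (2:ℝ)^j * |x - y| ≤ 2^n * (δ/2^n) :=
          mul_le_mul h2j hxy (abs_nonneg _) (by positivity)
        linarith)
  -- main right cover
  obtain ⟨t5, ht5c, ht5card⟩ := cover_of_pieces (T := F) (n := n)
      (S := {x | b ≤ x ∧ x ≤ B ∧ rho < 2^n * (B - x)}) (V := E (2*δ))
      (fun p : ℕ × ℕ × ℝ => {x | b ≤ x ∧ x ≤ B ∧ rho ≤ 2^(p.1+1)*(B - x) ∧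
        2^p.1*(B - x) ≤ rho ∧
        (p.2.1:ℝ)*(δ/2^(p.1+1)) ≤ B - x ∧ B - x ≤ ((p.2.1:ℝ)+1)*(δ/2^(p.1+1)) ∧
        F^[p.1+1] x ∈ ball p.2.2 (dynEntourage f (E δ) n)})
      ((Finset.range n) ×ˢ ((Finset.range C) ×ˢ s))
      (fun x hx => by
        obtain ⟨hx1, hx2, hx3⟩ := hx
        have hxB : (0:ℝ) ≤ B - x := by linarith
        have hex : ∃ k, rho ≤ 2^(k+1)*(B - x) := by
          refine ⟨n-1, ?_⟩
          rw [Nat.sub_add_cancel hn]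
          exact hx3.le
        set k := Nat.find hex with hk
        have hk1 : rho ≤ 2^(k+1)*(B - x) := Nat.find_spec hex
        have hk2 : 2^k*(B - x) ≤ rho := by
          match hkk : k with
          | 0 => simpa using (by linarith : B - x ≤ rho)
          | m+1 =>
            have hmin := Nat.find_min hex (by omega : m < k)
            push_neg at hmin
            exact hmin.le
        have hkn : k < n := by
          have h5 : k ≤ n - 1 := Nat.find_min' hex (by
            rw [Nat.sub_add_cancel hn]; exact hx3.le)
          omega
        have hguard : 2^(k+1)*(B - x) ≤ 2*rho := by
          rw [pow_succ]
          linarith [hk2]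
        have hval : F^[k+1] x = B - 2^(k+1)*(B - x) :=
          ext_iterate_right hab hmap hx2 hguard
        have hmem : F^[k+1] x ∈ Icc a b := by
          rw [hval, mem_Icc]
          constructor
          · have h6 : B - 2*rho = f b := by rw [hrho, hB]; ring
            linarith [hfb.1]
          · have h6 : b = B - rho := by rw [hrho]; ring
            linarith
        obtain ⟨c, hc, hxc⟩ := hcov hmem
        have hw : (0:ℝ) < δ/2^(k+1) := by positivity
        refine ⟨⟨k, ⌊(B - x)/(δ/2^(k+1))⌋₊, c⟩, ?_, hx1, hx2, hk1, hk2,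
          (floor_interval hw hxB).1, (floor_interval hw hxB).2, mem_ball_symmetry.2 hxc⟩
        rw [Finset.mem_product, Finset.mem_product]
        refine ⟨Finset.mem_range.2 hkn, Finset.mem_range.2 ?_, hc⟩
        have heq : (B - x)/(δ/2^(k+1)) = (2^(k+1) * (B - x))/δ := by
          field_simp
        rw [heq]
        exact hCb _ (by positivity) (by linarith)
      )
      (fun p hp x hx y hy j hj => by
        obtain ⟨k, i, c⟩ := p
        simp only at hx hy
        obtain ⟨hx1, hx2, hx3, hx4, hx5, hx6, hx7⟩ := hx
        obtain ⟨hy1, hy2, hy3, hy4, hy5, hy6, hy7⟩ := hy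
        have hxy : |x - y| ≤ δ/2^(k+1) := by
          rw [abs_sub_le_iff]
          constructor
          · linarith [hy5, hx6]
          · linarith [hx5, hy6]
        rcases le_or_gt j (k+1) with hjk | hjk
        · -- linear phase
          have h2j : (2:ℝ)^j ≤ 2^(k+1) := pow_le_pow_right₀ one_le_two hjk
          have hgx : 2^j * (B - x) ≤ 2*rho := by
            have h5 := mul_le_mul_of_nonneg_right h2j (by linarith [hx2] : (0:ℝ) ≤ B - x)
            have h6 : (2:ℝ)^(k+1)*(B-x) = 2*(2^k*(B-x)) := by ring
            linarith [hx4]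
          have hgy : 2^j * (B - y) ≤ 2*rho := by
            have h5 := mul_le_mul_of_nonneg_right h2j (by linarith [hy2] : (0:ℝ) ≤ B - y)
            have h6 : (2:ℝ)^(k+1)*(B-y) = 2*(2^k*(B-y)) := by ring
            linarith [hy4]
          rw [mem_E, ext_iterate_right hab hmap hx2 hgx, ext_iterate_right hab hmap hy2 hgy]
          have heq : (B - 2^j*(B - x)) - (B - 2^j*(B - y)) = 2^j * (x - y) := by ring
          rw [heq, abs_mul, abs_of_pos (pow_pos two_pos j)]
          have hfin : (2:ℝ)^(k+1) * (δ/2^(k+1)) = δ := by field_simp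
          have h4 : (2:ℝ)^j * |x - y| ≤ 2^(k+1) * (δ/2^(k+1)) :=
            mul_le_mul h2j hxy (abs_nonneg _) (by positivity)
          linarith
        · -- tail phase
          set m := j - (k+1) with hm
          have hmj : m + (k+1) = j := Nat.sub_add_cancel hjk.le
          have hmn : m < n := by omega
          have hguardx : 2^(k+1)*(B - x) ≤ 2*rho := by
            rw [pow_succ]; linarith [hx4]
          have hguardy : 2^(k+1)*(B - y) ≤ 2*rho := by
            rw [pow_succ]; linarith [hy4]
          have hmemx : F^[k+1] x ∈ Icc a b := by
            rw [ext_iterate_right hab hmap hx2 hguardx, ← hB, mem_Icc]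
            constructor
            · have h6 : B - 2*rho = f b := by rw [hrho, hB]; ring
              linarith [hfb.1, hx3]
            · have h6 : b = B - rho := by rw [hrho]; ring
              linarith [hx3]
          have hmemy : F^[k+1] y ∈ Icc a b := by
            rw [ext_iterate_right hab hmap hy2 hguardy, ← hB, mem_Icc]
            constructor
            · have h6 : B - 2*rho = f b := by rw [hrho, hB]; ring
              linarith [hfb.1, hy3]
            · have h6 : b = B - rho := by rw [hrho]; ring
              linarith [hy3]
          have hjx : F^[j] x = f^[m] (F^[k+1] x) := by
            rw [← hmj, iterate_add_apply, ext_iterate_mid hab hmap hmemx]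
          have hjy : F^[j] y = f^[m] (F^[k+1] y) := by
            rw [← hmj, iterate_add_apply, ext_iterate_mid hab hmap hmemy]
          have h1 := (mem_ball_dynEntourage.1 hx7) m hmn
          have h2 := (mem_ball_dynEntourage.1 hy7) m hmn
          rw [mem_ball_E] at h1 h2
          rw [mem_E, hjx, hjy]
          have heq : f^[m] (F^[k+1] x) - f^[m] (F^[k+1] y)
              = (f^[m] c - f^[m] (F^[k+1] y)) - (f^[m] c - f^[m] (F^[k+1] x)) := by ring
          rw [heq]
          calc |(f^[m] c - f^[m] (F^[k+1] y)) - (f^[m] c - f^[m] (F^[k+1] x))|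
              ≤ |f^[m] c - f^[m] (F^[k+1] y)| + |f^[m] c - f^[m] (F^[k+1] x)| := abs_sub _ _
          _ < 2*δ := by linarith)
  -- assemble
  have hunion := isDynCoverOf_union (isDynCoverOf_union
    (isDynCoverOf_union (isDynCoverOf_union ht1c ht2c) ht3c) ht4c) ht5c
  have hGsub : Icc A B ⊆ (((Icc a b ∪ {x | A ≤ x ∧ x ≤ a ∧ 2^n * (x - A) ≤ lam})
      ∪ {x | A ≤ x ∧ x ≤ a ∧ lam < 2^n * (x - A)})
      ∪ {x | b ≤ x ∧ x ≤ B ∧ 2^n * (B - x) ≤ rho})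
      ∪ {x | b ≤ x ∧ x ≤ B ∧ rho < 2^n * (B - x)} := by
    intro x hx
    rw [mem_Icc] at hx
    rcases le_or_gt x a with h | h
    · rcases le_or_gt (2^n * (x - A)) lam with h2 | h2
      · exact Or.inl (Or.inl (Or.inl (Or.inr ⟨hx.1, h, h2⟩)))
      · exact Or.inl (Or.inl (Or.inr ⟨hx.1, h, h2⟩))
    · rcases le_or_gt b x with h3 | h3
      · rcases le_or_gt (2^n * (B - x)) rho with h4 | h4
        · exact Or.inl (Or.inr ⟨h3, hx.2, h4⟩)
        · exact Or.inr ⟨h3, hx.2, h4⟩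
      · exact Or.inl (Or.inl (Or.inl (Or.inl ⟨h.le, h3.le⟩)))
  refine ⟨(((t1 ∪ t2) ∪ t3) ∪ t4) ∪ t5, hGsub.trans hunion, ?_⟩
  have hcard : ((((t1 ∪ t2) ∪ t3) ∪ t4) ∪ t5).card
      ≤ t1.card + t2.card + t3.card + t4.card + t5.card := by
    calc ((((t1 ∪ t2) ∪ t3) ∪ t4) ∪ t5).card
        ≤ (((t1 ∪ t2) ∪ t3) ∪ t4).card + t5.card := Finset.card_union_le _ _
    _ ≤ ((t1 ∪ t2) ∪ t3).card + t4.card + t5.card := by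
        linarith [Finset.card_union_le ((t1 ∪ t2) ∪ t3) t4]
    _ ≤ (t1 ∪ t2).card + t3.card + t4.card + t5.card := by
        linarith [Finset.card_union_le (t1 ∪ t2) t3]
    _ ≤ t1.card + t2.card + t3.card + t4.card + t5.card := by
        linarith [Finset.card_union_le t1 t2]
  have hprod : ((Finset.range n) ×ˢ ((Finset.range C) ×ˢ s)).card = n * (C * s.card) := by
    simp [Finset.card_product]
  rw [Finset.card_range] at ht2card ht4card
  rw [hprod] at ht3card ht5card
  have hC1 : 1 ≤ C := by omega
  have hCs : C ≤ C * s.card := Nat.le_mul_of_pos_right C (by omega)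
  calc ((((t1 ∪ t2) ∪ t3) ∪ t4) ∪ t5).card
      ≤ t1.card + t2.card + t3.card + t4.card + t5.card := hcard
  _ ≤ s.card + C + n * (C * s.card) + C + n * (C * s.card) := by omega
  _ ≤ (4*C + 1) * (n+1) * s.card := by nlinarith [hscard, hCs, hC1]




lemma ext_fix_left (hab : a ≤ b) (hmap : MapsTo f (Icc a b) (Icc a b)) :
    ext a b f (2*a - f a) = 2*a - f a := by
  have hfa := hmap ⟨le_refl a, hab⟩
  rw [mem_Icc] at hfa
  rw [ext_eq_left hab (by linarith [hfa.1])]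
  ring

lemma ext_fix_right (hab : a ≤ b) (hmap : MapsTo f (Icc a b) (Icc a b)) :
    ext a b f (2*b - f b) = 2*b - f b := by
  have hfb := hmap ⟨hab, le_refl b⟩
  rw [mem_Icc] at hfb
  rw [ext_eq_right hab (by linarith [hfb.2])]
  ring

lemma mincard_bound (hab : a ≤ b) (hmap : MapsTo f (Icc a b) (Icc a b))
    {δ : ℝ} (hδ : 0 < δ) :
    ∃ K : ℕ, 1 ≤ K ∧ ∀ n, 1 ≤ n →
      coverMincard (ext a b f) (Icc (2*a - f a) (2*b - f b)) (E (2*δ)) n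
        ≤ ((K * (n+1) : ℕ) : ℕ∞) * coverMincard f (Icc a b) (E δ) n := by
  refine ⟨4*(⌊(2*((a - (2*a - f a)) + ((2*b - f b) - b)))/δ⌋₊ + 1) + 1, by omega,
    fun n hn => ?_⟩
  have hfin : coverMincard f (Icc a b) (E δ) n < ⊤ :=
    coverMincard_finite_of_isCompact_invariant isCompact_Icc hmap (E_mem hδ) n
  obtain ⟨s, hs_cov, hs_card⟩ := (coverMincard_finite_iff f (Icc a b) (E δ) n).1 hfin
  obtain ⟨t, ht_cov, ht_card⟩ := main_cover hab hmap hδ hn hs_cov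
  calc coverMincard (ext a b f) (Icc (2*a - f a) (2*b - f b)) (E (2*δ)) n
      ≤ (t.card : ℕ∞) := ht_cov.coverMincard_le_card
  _ ≤ (((4*(⌊(2*((a - (2*a - f a)) + ((2*b - f b) - b)))/δ⌋₊ + 1) + 1) * (n+1) * s.card : ℕ) : ℕ∞) := by
      exact_mod_cast Nat.cast_le.2 ht_card
  _ = (((4*(⌊(2*((a - (2*a - f a)) + ((2*b - f b) - b)))/δ⌋₊ + 1) + 1) * (n+1) : ℕ) : ℕ∞) * (s.card : ℕ∞) := by
      rw [← Nat.cast_mul]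
  _ = _ := by rw [hs_card]

open ENNReal EReal Filter in
lemma entropy_le (hab : a ≤ b) (hmap : MapsTo f (Icc a b) (Icc a b)) :
    coverEntropy (ext a b f) (Icc (2*a - f a) (2*b - f b)) ≤ coverEntropy f (Icc a b) := by
  have hIne : (Icc a b).Nonempty := Set.nonempty_Icc.2 hab
  rw [coverEntropy_eq_iSup_basis Metric.uniformity_basis_dist (ext a b f)
    (Icc (2*a - f a) (2*b - f b))]
  refine iSup₂_le fun ε hε => ?_
  have hδ : (0:ℝ) < ε/2 := by linarith
  obtain ⟨K, hK1, hK⟩ := mincard_bound hab hmap hδ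
  have hEε : ({p : ℝ × ℝ | dist p.1 p.2 < ε}) = E (2*(ε/2)) := by
    rw [show (2*(ε/2)) = ε by ring]; rfl
  rw [hEε]
  set u := fun n : ℕ => ENNReal.log ((K * (n+1) : ℕ) : ℝ≥0∞) / (n : EReal) with hu
  set v := fun n : ℕ => ENNReal.log (coverMincard f (Icc a b) (E (ε/2)) n) / (n : EReal) with hv
  have key : (fun n : ℕ => ENNReal.log
      (coverMincard (ext a b f) (Icc (2*a - f a) (2*b - f b)) (E (2*(ε/2))) n) / (n : EReal))
      ≤ᶠ[atTop] u + v := by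
    filter_upwards [Filter.eventually_ge_atTop 1] with n hn
    have h1 := hK n hn
    have h2 : ENNReal.log (coverMincard (ext a b f) (Icc (2*a - f a) (2*b - f b)) (E (2*(ε/2))) n)
        ≤ ENNReal.log ((K * (n+1) : ℕ) : ℝ≥0∞)
          + ENNReal.log (coverMincard f (Icc a b) (E (ε/2)) n) := by
      rw [← ENNReal.log_mul_add]
      apply ENNReal.log_monotone
      calc ((coverMincard (ext a b f) (Icc (2*a - f a) (2*b - f b)) (E (2*(ε/2))) n : ℕ∞) : ℝ≥0∞)
          ≤ (((K * (n+1) : ℕ) : ℕ∞) * coverMincard f (Icc a b) (E (ε/2)) n : ℕ∞) :=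
            ENat.toENNReal_mono h1
      _ = _ := by rw [ENat.toENNReal_mul]; norm_cast
    have hun : (0:EReal) ≤ ENNReal.log ((K * (n+1) : ℕ) : ℝ≥0∞) := by
      rw [← ENNReal.log_one]
      apply ENNReal.log_monotone
      have : (1:ℕ) ≤ K * (n+1) := Nat.one_le_iff_ne_zero.2 (by positivity)
      exact_mod_cast this
    have hvn : (0:EReal) ≤ ENNReal.log (coverMincard f (Icc a b) (E (ε/2)) n) :=
      ENNReal.zero_le_log_iff.2 (by exact_mod_cast (one_le_coverMincard_iff f (Icc a b) (E (ε/2)) n).2 hIne)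
    calc ENNReal.log (coverMincard (ext a b f) (Icc (2*a - f a) (2*b - f b)) (E (2*(ε/2))) n) / (n : EReal)
        ≤ (ENNReal.log ((K * (n+1) : ℕ) : ℝ≥0∞)
            + ENNReal.log (coverMincard f (Icc a b) (E (ε/2)) n)) / (n : EReal) :=
          EReal.monotone_div_right_of_nonneg (Nat.cast_nonneg' n) h2
    _ = u n + v n := EReal.div_right_distrib_of_nonneg hun hvn
  apply (limsup_le_limsup key).trans
  have h0 : atTop.limsup u = 0 := (tendsto_log_lin hK1).limsup_eq
  have hadd := @limsup_add_le ℕ atTop u v (Or.inl (by rw [h0]; exact EReal.zero_ne_bot))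
    (Or.inl (by rw [h0]; exact EReal.zero_ne_top))
  apply hadd.trans
  rw [h0, zero_add]
  exact coverEntropyEntourage_le_coverEntropy f (Icc a b) (E_mem hδ)

end main

end Stmt16Aux




open Dynamics Set

/-- Continuous-map version of Lemma 2: any continuous selfmap of `[a,b]` extends to a
boundary-anchored continuous selfmap of a larger interval `[a',b']` with the same
topological entropy. -/
theorem stmt_16 (a b : ℝ) (hab : a ≤ b) (f : ℝ → ℝ)
    (hf : ContinuousOn f (Icc a b)) (hmap : MapsTo f (Icc a b) (Icc a b)) :
    ∃ a' ≤ a, ∃ b' ≥ b, ∃ F : ℝ → ℝ,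
      ContinuousOn F (Icc a' b') ∧ MapsTo F (Icc a' b') (Icc a' b') ∧
      EqOn F f (Icc a b) ∧ F '' {a', b'} ⊆ {a', b'} ∧
      coverEntropy F (Icc a' b') = coverEntropy f (Icc a b) := by
  have hfa := hmap ⟨le_refl a, hab⟩
  have hfb := hmap ⟨hab, le_refl b⟩
  rw [mem_Icc] at hfa hfb
  refine ⟨2*a - f a, by linarith [hfa.1], 2*b - f b, by linarith [hfb.2],
    Stmt16Aux.ext a b f, ?_, Stmt16Aux.ext_mapsTo hab hmap, ?_, ?_, ?_⟩
  · exact (Stmt16Aux.ext_continuousOn hab hf).mono (subset_univ _)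
  · exact fun x hx => Stmt16Aux.ext_eq_mid hab hx
  · rintro y ⟨x, hx, rfl⟩
    rcases hx with rfl | hx
    · rw [Stmt16Aux.ext_fix_left hab hmap]; exact Or.inl rfl
    · rw [mem_singleton_iff] at hx
      subst hx
      rw [Stmt16Aux.ext_fix_right hab hmap]; exact Or.inr rfl
  · apply le_antisymm (Stmt16Aux.entropy_le hab hmap)
    have hsub : Icc a b ⊆ Icc (2*a - f a) (2*b - f b) :=
      Icc_subset_Icc (by linarith [hfa.1]) (by linarith [hfb.2])
    have hFI : MapsTo (Stmt16Aux.ext a b f) (Icc a b) (Icc a b) :=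
      Stmt16Aux.ext_mapsTo_I hab hmap
    have hcongr := Stmt16Aux.coverEntropy_congr_inv hFI hmap
      (fun x hx => Stmt16Aux.ext_eq_mid hab hx)
    rw [← hcongr]
    exact Stmt16Aux.coverEntropy_mono_set hsub
end
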